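/- (Kleene's theorem, expression-to-automaton direction) For every regular expression e over an alphabet α, there exist a finite type σ and a nondeterministic finite automaton M over α with state type σ such that M.accepts = ⟦e⟧. -/

import Mathlib

open Set Computability

theorem NFA.evalFrom_append_singleton {α σ : Type} (M : NFA α σ) (S : Set σ) (x : List α)
    (a : α) : M.evalFrom S (x ++ [a]) = M.stepSet (M.evalFrom S x) a := by
  rw [NFA.evalFrom_append, NFA.evalFrom_singleton]

namespace KleeneAux


variable {α : Type} {σ σ₁ σ₂ : Type}

lemma evalFrom_empty (M : NFA α σ) (x : List α) : M.evalFrom ∅ x = ∅ := by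
  induction x with
  | nil => rfl
  | cons a x ih =>
      show M.evalFrom (M.stepSet ∅ a) x = ∅
      rw [M.stepSet_empty]; exact ih

lemma mem_stepSet_mono (M : NFA α σ) {A B : Set σ} (h : A ⊆ B) {a : α} {s : σ}
    (hs : s ∈ M.stepSet A a) : s ∈ M.stepSet B a := by
  rw [NFA.mem_stepSet] at hs ⊢
  obtain ⟨t, ht, hst⟩ := hs
  exact ⟨t, h ht, hst⟩

/-- The `0` automaton. -/
def nfaZero : NFA α Unit := ⟨fun _ _ => ∅, ∅, ∅⟩

lemma nfaZero_accepts : (nfaZero : NFA α Unit).accepts = 0 := by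
  ext x
  simp [NFA.mem_accepts, nfaZero]

/-- The `ε` automaton. -/
def nfaEps : NFA α Unit := ⟨fun _ _ => ∅, univ, univ⟩

lemma nfaEps_accepts : (nfaEps : NFA α Unit).accepts = 1 := by
  ext x
  cases x with
  | nil =>
      simp only [NFA.mem_accepts, Language.mem_one]
      constructor
      · intro _; trivial
      · intro _; exact ⟨(), trivial, trivial⟩
  | cons a x =>
      have h1 : (nfaEps : NFA α Unit).stepSet (nfaEps : NFA α Unit).start a = ∅ := by
        simp [NFA.stepSet, nfaEps]
      have h2 : (nfaEps : NFA α Unit).evalFrom (nfaEps : NFA α Unit).start (a :: x) = ∅ := by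
        show (nfaEps : NFA α Unit).evalFrom
          ((nfaEps : NFA α Unit).stepSet (nfaEps : NFA α Unit).start a) x = ∅
        rw [h1, evalFrom_empty]
      simp only [NFA.mem_accepts, h2, Language.mem_one]
      simp

/-- The single-character automaton. -/
def nfaChar (c : α) : NFA α Bool :=
  ⟨fun s b => {t | s = false ∧ b = c ∧ t = true}, {false}, {true}⟩

lemma nfaChar_accepts (c : α) : (nfaChar c).accepts = {[c]} := by
  ext x
  simp only [NFA.mem_accepts, Set.mem_singleton_iff]
  constructor
  · rintro ⟨S, hS, hmem⟩
    have hS' : S = true := hS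
    subst hS'
    match x with
    | [] =>
        exfalso
        have : true ∈ ({false} : Set Bool) := hmem
        simp at this
    | [b] =>
        rw [NFA.evalFrom_singleton, NFA.mem_stepSet] at hmem
        obtain ⟨t, ht, h2⟩ := hmem
        obtain ⟨-, rfl, -⟩ := h2
        rfl
    | b :: d :: y =>
        exfalso
        have hsub : (nfaChar c).stepSet (nfaChar c).start b ⊆ {true} := by
          intro t ht
          rw [NFA.mem_stepSet] at ht
          obtain ⟨u, hu, h2⟩ := ht
          exact h2.2.2
        have step2 : (nfaChar c).stepSet ((nfaChar c).stepSet (nfaChar c).start b) d = ∅ := by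
          ext t
          simp only [Set.mem_empty_iff_false, iff_false]
          intro ht
          rw [NFA.mem_stepSet] at ht
          obtain ⟨u, hu, h2⟩ := ht
          have : u ∈ ({true} : Set Bool) := hsub hu
          simp only [Set.mem_singleton_iff] at this
          subst this
          exact Bool.noConfusion h2.1
        have : (nfaChar c).evalFrom (nfaChar c).start (b :: d :: y) = ∅ := by
          show (nfaChar c).evalFrom
            ((nfaChar c).stepSet ((nfaChar c).stepSet (nfaChar c).start b) d) y = ∅
          rw [step2, evalFrom_empty]
        rw [this] at hmem
        exact hmem
  · rintro rfl
    refine ⟨true, rfl, ?_⟩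
    rw [NFA.evalFrom_singleton, NFA.mem_stepSet]
    exact ⟨false, rfl, rfl, rfl, rfl⟩




/-- Union automaton. -/
def nfaPlus (M₁ : NFA α σ₁) (M₂ : NFA α σ₂) : NFA α (σ₁ ⊕ σ₂) where
  step q a := Sum.elim (fun s => Sum.inl '' M₁.step s a) (fun s => Sum.inr '' M₂.step s a) q
  start := Sum.inl '' M₁.start ∪ Sum.inr '' M₂.start
  accept := Sum.inl '' M₁.accept ∪ Sum.inr '' M₂.accept

lemma nfaPlus_stepSet (M₁ : NFA α σ₁) (M₂ : NFA α σ₂) (A : Set σ₁) (B : Set σ₂) (a : α) :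
    (nfaPlus M₁ M₂).stepSet (Sum.inl '' A ∪ Sum.inr '' B) a
      = Sum.inl '' M₁.stepSet A a ∪ Sum.inr '' M₂.stepSet B a := by
  ext q
  cases q <;> simp [NFA.mem_stepSet, nfaPlus]

lemma nfaPlus_eval (M₁ : NFA α σ₁) (M₂ : NFA α σ₂) (x : List α) :
    (nfaPlus M₁ M₂).evalFrom (nfaPlus M₁ M₂).start x
      = Sum.inl '' M₁.evalFrom M₁.start x ∪ Sum.inr '' M₂.evalFrom M₂.start x := by
  induction x using List.reverseRecOn with
  | nil => rfl
  | append_singleton x a ih =>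
      rw [NFA.evalFrom_append_singleton, NFA.evalFrom_append_singleton,
        NFA.evalFrom_append_singleton, ih, nfaPlus_stepSet]

lemma nfaPlus_accepts (M₁ : NFA α σ₁) (M₂ : NFA α σ₂) :
    (nfaPlus M₁ M₂).accepts = M₁.accepts + M₂.accepts := by
  ext x
  rw [NFA.mem_accepts, Language.mem_add, NFA.mem_accepts, NFA.mem_accepts]
  rw [show ∀ y, (nfaPlus M₁ M₂).evalFrom (nfaPlus M₁ M₂).start y
      = Sum.inl '' M₁.evalFrom M₁.start y ∪ Sum.inr '' M₂.evalFrom M₂.start y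
    from nfaPlus_eval M₁ M₂]
  constructor
  · rintro ⟨q, hq, hmem⟩
    rcases hq with ⟨s, hs, rfl⟩ | ⟨s, hs, rfl⟩
    · left
      rcases hmem with ⟨t, ht, h⟩ | ⟨t, ht, h⟩
      · cases h; exact ⟨s, hs, ht⟩
      · exact absurd h (by simp)
    · right
      rcases hmem with ⟨t, ht, h⟩ | ⟨t, ht, h⟩
      · exact absurd h (by simp)
      · cases h; exact ⟨s, hs, ht⟩
  · rintro (⟨s, hs, hmem⟩ | ⟨s, hs, hmem⟩)
    · exact ⟨Sum.inl s, Or.inl ⟨s, hs, rfl⟩, Or.inl ⟨s, hmem, rfl⟩⟩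
    · exact ⟨Sum.inr s, Or.inr ⟨s, hs, rfl⟩, Or.inr ⟨s, hmem, rfl⟩⟩




/-- Concatenation automaton. -/
def nfaComp (M₁ : NFA α σ₁) (M₂ : NFA α σ₂) : NFA α (σ₁ ⊕ σ₂) where
  step q a :=
    Sum.elim
      (fun s => Sum.inl '' M₁.step s a
        ∪ Sum.inr '' {t ∈ M₂.start | (M₁.step s a ∩ M₁.accept).Nonempty})
      (fun s => Sum.inr '' M₂.step s a) q
  start := Sum.inl '' M₁.start ∪ Sum.inr '' {t ∈ M₂.start | (M₁.start ∩ M₁.accept).Nonempty}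
  accept := Sum.inr '' M₂.accept

/-- States of `M₂` reachable in the concatenation automaton after reading `x`. -/
def compAux (M₁ : NFA α σ₁) (M₂ : NFA α σ₂) (x : List α) : Set σ₂ :=
  {t | ∃ y z : List α, y ++ z = x ∧ y ∈ M₁.accepts ∧ t ∈ M₂.evalFrom M₂.start z}

lemma nfaComp_stepSet (M₁ : NFA α σ₁) (M₂ : NFA α σ₂) (A : Set σ₁) (B : Set σ₂) (a : α) :
    (nfaComp M₁ M₂).stepSet (Sum.inl '' A ∪ Sum.inr '' B) a
      = Sum.inl '' M₁.stepSet A a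
        ∪ Sum.inr '' ({t ∈ M₂.start | (M₁.stepSet A a ∩ M₁.accept).Nonempty}
            ∪ M₂.stepSet B a) := by
  ext q
  cases q with
  | inl t =>
      simp only [NFA.mem_stepSet, nfaComp, Set.mem_union, Set.mem_image, Set.mem_setOf_eq,
        Set.mem_inter_iff, Set.Nonempty]
      aesop
  | inr t =>
      simp only [NFA.mem_stepSet, nfaComp, Set.mem_union, Set.mem_image, Set.mem_setOf_eq,
        Set.mem_inter_iff, Set.Nonempty]
      aesop

lemma mem_accepts_append_iff (M₁ : NFA α σ₁) (x : List α) (a : α) :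
    x ++ [a] ∈ M₁.accepts ↔
      (M₁.stepSet (M₁.evalFrom M₁.start x) a ∩ M₁.accept).Nonempty := by
  rw [NFA.mem_accepts, ← NFA.evalFrom_append_singleton]
  constructor
  · rintro ⟨s, hs, hmem⟩; exact ⟨s, hmem, hs⟩
  · rintro ⟨s, hmem, hs⟩; exact ⟨s, hs, hmem⟩

lemma nil_mem_accepts_iff (M₁ : NFA α σ₁) :
    [] ∈ M₁.accepts ↔ (M₁.start ∩ M₁.accept).Nonempty := by
  rw [NFA.mem_accepts]
  constructor
  · rintro ⟨s, hs, hmem⟩; exact ⟨s, hmem, hs⟩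
  · rintro ⟨s, hmem, hs⟩; exact ⟨s, hs, hmem⟩

lemma append_singleton_cases {y z x : List α} {a : α} (h : y ++ z = x ++ [a]) :
    (z = [] ∧ y = x ++ [a]) ∨ ∃ z', z = z' ++ [a] ∧ y ++ z' = x := by
  rcases z.eq_nil_or_concat with rfl | ⟨z', b, rfl⟩
  · left; simpa using h
  · right
    rw [List.concat_eq_append, ← List.append_assoc] at h
    obtain ⟨h1, h2⟩ := List.append_inj' h rfl
    obtain rfl : b = a := by injection h2
    exact ⟨z', by simp, h1⟩

lemma compAux_append (M₁ : NFA α σ₁) (M₂ : NFA α σ₂) (x : List α) (a : α) :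
    compAux M₁ M₂ (x ++ [a])
      = {t ∈ M₂.start | x ++ [a] ∈ M₁.accepts} ∪ M₂.stepSet (compAux M₁ M₂ x) a := by
  ext t
  constructor
  · rintro ⟨y, z, hyz, hy, ht⟩
    rcases append_singleton_cases hyz with ⟨rfl, rfl⟩ | ⟨z', rfl, hx⟩
    · exact Or.inl ⟨ht, hy⟩
    · right
      rw [NFA.evalFrom_append_singleton, NFA.mem_stepSet] at ht
      obtain ⟨u, hu, htu⟩ := ht
      rw [NFA.mem_stepSet]
      exact ⟨u, ⟨y, z', hx, hy, hu⟩, htu⟩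
  · rintro (⟨ht, hx⟩ | ht)
    · exact ⟨x ++ [a], [], by simp, hx, ht⟩
    · rw [NFA.mem_stepSet] at ht
      obtain ⟨u, ⟨y, z, hyz, hy, hu⟩, htu⟩ := ht
      refine ⟨y, z ++ [a], by rw [← List.append_assoc, hyz], hy, ?_⟩
      rw [NFA.evalFrom_append_singleton, NFA.mem_stepSet]
      exact ⟨u, hu, htu⟩

lemma nfaComp_eval (M₁ : NFA α σ₁) (M₂ : NFA α σ₂) (x : List α) :
    (nfaComp M₁ M₂).evalFrom (nfaComp M₁ M₂).start x
      = Sum.inl '' M₁.evalFrom M₁.start x ∪ Sum.inr '' compAux M₁ M₂ x := by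
  induction x using List.reverseRecOn with
  | nil =>
      show (nfaComp M₁ M₂).start = _
      rw [show compAux M₁ M₂ [] = {t ∈ M₂.start | (M₁.start ∩ M₁.accept).Nonempty} from ?_]
      · rfl
      · ext t
        constructor
        · rintro ⟨y, z, hyz, hy, ht⟩
          obtain ⟨rfl, rfl⟩ : y = [] ∧ z = [] := List.append_eq_nil_iff.mp hyz
          exact ⟨ht, (nil_mem_accepts_iff M₁).mp hy⟩
        · rintro ⟨ht, hne⟩
          exact ⟨[], [], rfl, (nil_mem_accepts_iff M₁).mpr hne, ht⟩
  | append_singleton x a ih =>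
      rw [NFA.evalFrom_append_singleton, ih, nfaComp_stepSet,
        NFA.evalFrom_append_singleton, compAux_append,
        mem_accepts_append_iff]

lemma nfaComp_accepts (M₁ : NFA α σ₁) (M₂ : NFA α σ₂) :
    (nfaComp M₁ M₂).accepts = M₁.accepts * M₂.accepts := by
  ext x
  rw [NFA.mem_accepts, Language.mem_mul]
  constructor
  · rintro ⟨q, hq, hmem⟩
    obtain ⟨t, ht, rfl⟩ := hq
    rw [nfaComp_eval] at hmem
    rcases hmem with ⟨s, _, h⟩ | ⟨s, hs, h⟩
    · exact absurd h (by simp)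
    · obtain rfl : s = t := by injection h
      obtain ⟨y, z, hyz, hy, hmem₂⟩ := hs
      exact ⟨y, hy, z, ⟨s, ht, hmem₂⟩, hyz⟩
  · rintro ⟨y, hy, z, hz, rfl⟩
    rw [NFA.mem_accepts] at hz
    obtain ⟨t, ht, hmem⟩ := hz
    refine ⟨Sum.inr t, ⟨t, ht, rfl⟩, ?_⟩
    rw [nfaComp_eval]
    exact Or.inr ⟨t, ⟨y, z, rfl, hy, hmem⟩, rfl⟩




lemma kstar_append {L : Language α} {y z : List α} (hy : y ∈ L∗) (hz : z ∈ L) :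
    y ++ z ∈ L∗ := by
  rw [Language.mem_kstar] at hy ⊢
  obtain ⟨S, rfl, hS⟩ := hy
  refine ⟨S ++ [z], by simp, ?_⟩
  intro w hw
  rcases List.mem_append.mp hw with h | h
  · exact hS w h
  · simp only [List.mem_singleton] at h; subst h; exact hz

lemma exists_last_block {L : Language α} {x : List α} (h : x ∈ L∗) (hx : x ≠ []) :
    ∃ y z, y ++ z = x ∧ y ∈ L∗ ∧ z ∈ L ∧ z ≠ [] := by
  rw [Language.mem_kstar_iff_exists_nonempty] at h
  obtain ⟨S, rfl, hS⟩ := h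
  rcases S.eq_nil_or_concat with rfl | ⟨S', z, rfl⟩
  · exact absurd rfl hx
  · refine ⟨S'.flatten, z, by simp, ?_, (hS z (by simp)).1, (hS z (by simp)).2⟩
    exact Language.join_mem_kstar fun w hw => (hS w (by simp [hw])).1

/-- Star automaton. -/
def nfaStar (M : NFA α σ) : NFA α (Option σ) where
  step q a :=
    Option.elim q ∅
      (fun s => some '' (M.step s a ∪ {t ∈ M.start | (M.step s a ∩ M.accept).Nonempty}))
  start := insert none (some '' M.start)
  accept := insert none (some '' M.accept)

/-- States of `M` reachable in the star automaton after reading `x`. -/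
def starAux (M : NFA α σ) (x : List α) : Set σ :=
  {t | ∃ y z : List α, y ++ z = x ∧ y ∈ M.accepts∗ ∧ t ∈ M.evalFrom M.start z}

lemma starAux_nil (M : NFA α σ) : starAux M [] = M.start := by
  ext t
  constructor
  · rintro ⟨y, z, hyz, hy, ht⟩
    obtain ⟨rfl, rfl⟩ := List.append_eq_nil_iff.mp hyz
    exact ht
  · intro ht
    exact ⟨[], [], rfl, Language.nil_mem_kstar _, ht⟩

lemma nfaStar_stepSet (M : NFA α σ) (N : Set (Option σ)) (hN : N ⊆ {none}) (T : Set σ)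
    (a : α) :
    (nfaStar M).stepSet (N ∪ some '' T) a
      = some '' (M.stepSet T a ∪ {t ∈ M.start | (M.stepSet T a ∩ M.accept).Nonempty}) := by
  ext q
  constructor
  · intro hq
    rw [NFA.mem_stepSet] at hq
    obtain ⟨u, hu, hq⟩ := hq
    rcases hu with hu | ⟨s, hs, rfl⟩
    · have : u = none := hN hu
      subst this
      exact absurd hq (by simp [nfaStar])
    · obtain ⟨t, ht, rfl⟩ := hq
      refine ⟨t, ?_, rfl⟩
      rcases ht with ht | ⟨ht1, ht2⟩
      · exact Or.inl (by rw [NFA.mem_stepSet]; exact ⟨s, hs, ht⟩)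
      · refine Or.inr ⟨ht1, ?_⟩
        obtain ⟨v, hv1, hv2⟩ := ht2
        exact ⟨v, by rw [NFA.mem_stepSet]; exact ⟨s, hs, hv1⟩, hv2⟩
  · rintro ⟨t, ht, rfl⟩
    rw [NFA.mem_stepSet]
    rcases ht with ht | ⟨ht1, ht2⟩
    · rw [NFA.mem_stepSet] at ht
      obtain ⟨s, hs, hts⟩ := ht
      exact ⟨some s, Or.inr ⟨s, hs, rfl⟩, ⟨t, Or.inl hts, rfl⟩⟩
    · obtain ⟨v, hv1, hv2⟩ := ht2
      rw [NFA.mem_stepSet] at hv1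
      obtain ⟨s, hs, hvs⟩ := hv1
      exact ⟨some s, Or.inr ⟨s, hs, rfl⟩, ⟨t, Or.inr ⟨ht1, v, hvs, hv2⟩, rfl⟩⟩

lemma append_singleton_cases' {y z x : List α} {a : α} (h : y ++ z = x ++ [a]) :
    (z = [] ∧ y = x ++ [a]) ∨ ∃ z', z = z' ++ [a] ∧ y ++ z' = x := by
  rcases z.eq_nil_or_concat with rfl | ⟨z', b, rfl⟩
  · left; simpa using h
  · right
    rw [List.concat_eq_append, ← List.append_assoc] at h
    obtain ⟨h1, h2⟩ := List.append_inj' h rfl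
    obtain rfl : b = a := by injection h2
    exact ⟨z', by simp, h1⟩

lemma starAux_accept_iff (M : NFA α σ) (x : List α) (a : α) :
    x ++ [a] ∈ M.accepts∗ ↔ (M.stepSet (starAux M x) a ∩ M.accept).Nonempty := by
  constructor
  · intro h
    obtain ⟨y, z, hyz, hy, hz, hzne⟩ := exists_last_block h (by simp)
    rcases append_singleton_cases' hyz with ⟨rfl, _⟩ | ⟨z', rfl, hx⟩
    · exact absurd rfl hzne
    · rw [NFA.mem_accepts] at hz
      obtain ⟨s, hs, hmem⟩ := hz
      rw [NFA.evalFrom_append_singleton, NFA.mem_stepSet] at hmem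
      obtain ⟨u, hu, hsu⟩ := hmem
      refine ⟨s, ?_, hs⟩
      rw [NFA.mem_stepSet]
      exact ⟨u, ⟨y, z', hx, hy, hu⟩, hsu⟩
  · rintro ⟨s, hstep, hacc⟩
    rw [NFA.mem_stepSet] at hstep
    obtain ⟨u, ⟨y, z, hyz, hy, hu⟩, hsu⟩ := hstep
    have hz : z ++ [a] ∈ M.accepts := by
      rw [NFA.mem_accepts]
      refine ⟨s, hacc, ?_⟩
      rw [NFA.evalFrom_append_singleton, NFA.mem_stepSet]
      exact ⟨u, hu, hsu⟩
    have := kstar_append hy hz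
    rwa [← List.append_assoc, hyz] at this

lemma starAux_append (M : NFA α σ) (x : List α) (a : α) :
    starAux M (x ++ [a])
      = M.stepSet (starAux M x) a ∪ {t ∈ M.start | x ++ [a] ∈ M.accepts∗} := by
  ext t
  constructor
  · rintro ⟨y, z, hyz, hy, ht⟩
    rcases append_singleton_cases' hyz with ⟨rfl, rfl⟩ | ⟨z', rfl, hx⟩
    · exact Or.inr ⟨ht, hy⟩
    · left
      rw [NFA.evalFrom_append_singleton, NFA.mem_stepSet] at ht
      obtain ⟨u, hu, htu⟩ := ht
      rw [NFA.mem_stepSet]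
      exact ⟨u, ⟨y, z', hx, hy, hu⟩, htu⟩
  · rintro (ht | ⟨ht, hx⟩)
    · rw [NFA.mem_stepSet] at ht
      obtain ⟨u, ⟨y, z, hyz, hy, hu⟩, htu⟩ := ht
      refine ⟨y, z ++ [a], by rw [← List.append_assoc, hyz], hy, ?_⟩
      rw [NFA.evalFrom_append_singleton, NFA.mem_stepSet]
      exact ⟨u, hu, htu⟩
    · exact ⟨x ++ [a], [], by simp, hx, ht⟩

lemma nfaStar_eval (M : NFA α σ) (x : List α) :
    (nfaStar M).evalFrom (nfaStar M).start x
      = {q | q = none ∧ x = []} ∪ some '' starAux M x := by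
  induction x using List.reverseRecOn with
  | nil =>
      show (nfaStar M).start = _
      rw [starAux_nil]
      show insert none (some '' M.start) = _
      rw [Set.insert_eq]
      congr 1
      ext q
      simp
  | append_singleton x a ih =>
      rw [NFA.evalFrom_append_singleton, ih,
        nfaStar_stepSet M _ (fun q hq => hq.1) (starAux M x) a,
        starAux_append, ← starAux_accept_iff]
      have h1 : {q : Option σ | q = none ∧ x ++ [a] = []} = ∅ := by
        ext q; simp
      rw [h1, Set.empty_union, Set.union_comm (M.stepSet (starAux M x) a)]

lemma nfaStar_accepts (M : NFA α σ) : (nfaStar M).accepts = M.accepts∗ := by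
  ext x
  rw [NFA.mem_accepts]
  constructor
  · rintro ⟨q, hq, hmem⟩
    rw [nfaStar_eval] at hmem
    rcases hq with rfl | ⟨t, ht, rfl⟩
    · rcases hmem with ⟨-, rfl⟩ | ⟨t, _, h⟩
      · exact Language.nil_mem_kstar _
      · exact absurd h (by simp)
    · rcases hmem with ⟨h, -⟩ | ⟨u, hu, h⟩
      · exact absurd h (by simp)
      · have htu : u = t := by injection h
        obtain ⟨y, z, hyz, hy, hmem'⟩ := hu
        have hz : z ∈ M.accepts := ⟨t, ht, htu ▸ hmem'⟩
        rw [← hyz]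
        exact kstar_append hy hz
  · intro hx
    by_cases h : x = []
    · subst h
      refine ⟨none, Or.inl rfl, ?_⟩
      rw [nfaStar_eval]
      exact Or.inl ⟨rfl, rfl⟩
    · obtain ⟨y, z, hyz, hy, hz, hzne⟩ := exists_last_block hx h
      rw [NFA.mem_accepts] at hz
      obtain ⟨t, ht, hmem⟩ := hz
      refine ⟨some t, Or.inr ⟨t, ht, rfl⟩, ?_⟩
      rw [nfaStar_eval]
      exact Or.inr ⟨t, ⟨y, z, hyz, hy, hmem⟩, rfl⟩

end KleeneAux

/-- Kleene's theorem, expression-to-automaton direction. -/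
theorem regexp_to_nfa {α : Type} (e : RegularExpression α) :
    ∃ (σ : Type) (_ : Fintype σ) (M : NFA α σ), M.accepts = e.matches' := by
  induction e with
  | zero => exact ⟨Unit, inferInstance, KleeneAux.nfaZero, KleeneAux.nfaZero_accepts⟩
  | epsilon => exact ⟨Unit, inferInstance, KleeneAux.nfaEps, KleeneAux.nfaEps_accepts⟩
  | char a => exact ⟨Bool, inferInstance, KleeneAux.nfaChar a, KleeneAux.nfaChar_accepts a⟩
  | plus e f ihe ihf =>
      obtain ⟨σ₁, i₁, M₁, h₁⟩ := ihe
      obtain ⟨σ₂, i₂, M₂, h₂⟩ := ihf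
      haveI := i₁; haveI := i₂
      refine ⟨σ₁ ⊕ σ₂, inferInstance, KleeneAux.nfaPlus M₁ M₂, ?_⟩
      rw [KleeneAux.nfaPlus_accepts, h₁, h₂]
      rfl
  | comp e f ihe ihf =>
      obtain ⟨σ₁, i₁, M₁, h₁⟩ := ihe
      obtain ⟨σ₂, i₂, M₂, h₂⟩ := ihf
      haveI := i₁; haveI := i₂
      refine ⟨σ₁ ⊕ σ₂, inferInstance, KleeneAux.nfaComp M₁ M₂, ?_⟩
      rw [KleeneAux.nfaComp_accepts, h₁, h₂]
      rfl
  | star e ih =>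
      obtain ⟨σ₁, i₁, M₁, h₁⟩ := ih
      haveI := i₁
      refine ⟨Option σ₁, inferInstance, KleeneAux.nfaStar M₁, ?_⟩
      rw [KleeneAux.nfaStar_accepts, h₁]
      rfl
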